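/- Let f, g ∈ L²(ℝ) with f̂ denoting the Fourier–Plancherel transform. Suppose μ and ν are the probability measures dμ(q) = |f(q)|² dq and dν(p) = |f̂(p)|² dp for some unit vector f ∈ L²(ℝ). Then μ and ν cannot both have bounded support, i.e. it is impossible that both f and f̂ have compact support (unless f = 0). -/

import Mathlib

open MeasureTheory

noncomputable section

open Complex Filter Real Set
open scoped FourierTransform Topology ContDiff RealInnerProductSpace

/-- A smooth compactly supported function is a Schwartz map. -/
def schwartzOfCompactSupport (g : ℝ → ℂ) (hg : ContDiff ℝ ∞ g)
    (h : HasCompactSupport g) : SchwartzMap ℝ ℂ where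
  toFun := g
  smooth' := hg
  decay' := by
    intro k n
    have h1 : HasCompactSupport (iteratedFDeriv ℝ n g) := h.iteratedFDeriv n
    have h2 : Continuous (iteratedFDeriv ℝ n g) :=
      hg.continuous_iteratedFDeriv (mod_cast le_top)
    have h3 : Continuous fun x : ℝ => ‖x‖ ^ k * ‖iteratedFDeriv ℝ n g x‖ := by
      fun_prop
    have h4 : HasCompactSupport fun x : ℝ => ‖x‖ ^ k * ‖iteratedFDeriv ℝ n g x‖ :=
      h1.norm.mul_left
    obtain ⟨C, hC⟩ := h3.bounded_above_of_compact_support h4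
    refine ⟨C, fun x => ?_⟩
    have h5 := hC x
    rwa [Real.norm_eq_abs, _root_.abs_of_nonneg (by positivity)] at h5

lemma abs_two_pi_neg (x : ℝ) : |2 * π * -x| = 2 * π * |x| := by
  rw [abs_mul, abs_neg, abs_mul, _root_.abs_of_nonneg Real.pi_pos.le]
  norm_num

theorem stmt18 (f : ℝ → ℂ) (hf : MemLp f 2 (volume : Measure ℝ))
    (hsupp : HasCompactSupport f)
    (hsupp' : HasCompactSupport (FourierTransform.fourier f)) :
    f =ᵐ[volume] 0 := by
  -- f is integrable
  have hL1 : Integrable f := by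
    have h1 : LocallyIntegrable f volume := hf.locallyIntegrable one_le_two
    exact (h1.integrableOn_isCompact hsupp).integrable_of_forall_notMem_eq_zero
      fun x hx => image_eq_zero_of_notMem_tsupport hx
  -- radius of support of f
  obtain ⟨R, hR⟩ : ∃ R : ℝ, tsupport f ⊆ Metric.closedBall 0 R :=
    hsupp.isBounded.subset_closedBall 0
  have hfR : ∀ x : ℝ, R < |x| → f x = 0 := by
    intro x hx
    apply image_eq_zero_of_notMem_tsupport
    intro hmem
    have := hR hmem
    rw [Metric.mem_closedBall, Real.dist_eq, sub_zero] at this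
    linarith
  set R₀ : ℝ := max R 0 with hR₀
  have hRR₀ : R ≤ R₀ := le_max_left _ _
  -- the entire extension of the Fourier transform
  set F : ℂ → ℝ → ℂ := fun z x => Complex.exp (↑(2 * π * (-x)) * (z * Complex.I)) * f x
    with hF
  set F' : ℂ → ℝ → ℂ :=
    fun z x => (↑(2 * π * (-x)) * Complex.I) * Complex.exp (↑(2 * π * (-x)) * (z * Complex.I))
      * f x with hF'
  set g : ℂ → ℂ := fun z => ∫ x : ℝ, F z x with hg
  -- norm computations
  have hnorm : ∀ (z : ℂ) (x : ℝ),
      ‖Complex.exp (↑(2 * π * (-x)) * (z * Complex.I))‖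
        = Real.exp (2 * π * (-x) * (-z.im)) := by
    intro z x
    rw [Complex.norm_exp, Complex.re_ofReal_mul, Complex.mul_I_re]
  have hexp_le : ∀ (z : ℂ) (x : ℝ) (M : ℝ), |x| ≤ R₀ → |z.im| ≤ M →
      Real.exp (2 * π * (-x) * (-z.im)) ≤ Real.exp (2 * π * R₀ * M) := by
    intro z x M hx hM
    apply Real.exp_le_exp.2
    calc 2 * π * (-x) * (-z.im) ≤ |2 * π * (-x) * (-z.im)| := le_abs_self _
      _ = 2 * π * |x| * |z.im| := by rw [abs_mul, abs_two_pi_neg, abs_neg]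
      _ ≤ 2 * π * R₀ * M := by
          apply mul_le_mul (by gcongr) hM (abs_nonneg _) (by positivity)
  have hbnd : ∀ (z₀ z : ℂ), z ∈ Metric.ball z₀ 1 → ∀ x : ℝ,
      ‖F' z x‖ ≤ 2 * π * R₀ * Real.exp (2 * π * R₀ * (|z₀.im| + 1)) * ‖f x‖ := by
    intro z₀ z hz x
    rcases le_or_gt |x| R with hxR | hxR
    · have hxR₀ : |x| ≤ R₀ := hxR.trans hRR₀
      have him : |z.im| ≤ |z₀.im| + 1 := by
        have h1 : |z.im - z₀.im| ≤ ‖z - z₀‖ := by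
          have := Complex.abs_im_le_norm (z - z₀)
          rwa [Complex.sub_im] at this
        have h2 : ‖z - z₀‖ < 1 := by
          rw [Metric.mem_ball] at hz
          simpa [Complex.dist_eq] using hz
        have := abs_sub_abs_le_abs_sub z.im z₀.im
        linarith
      have e1 : ‖F' z x‖ = 2 * π * |x| * Real.exp (2 * π * (-x) * (-z.im)) * ‖f x‖ := by
        simp only [hF', norm_mul, hnorm, Complex.norm_I, mul_one, Complex.norm_real,
          Real.norm_eq_abs, abs_mul, abs_neg]
        rw [_root_.abs_of_nonneg Real.pi_pos.le]
        norm_num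
      rw [e1]
      apply mul_le_mul_of_nonneg_right _ (norm_nonneg _)
      apply mul_le_mul (by gcongr) (hexp_le z x _ hxR₀ him) (Real.exp_pos _).le (by positivity)
    · simp only [hF', hfR x hxR, mul_zero, norm_zero]
      positivity
  -- g is differentiable everywhere
  have hderiv : ∀ z₀ : ℂ, HasDerivAt g (∫ x : ℝ, F' z₀ x) z₀ := by
    intro z₀
    have hmeas : ∀ z : ℂ, AEStronglyMeasurable (F z) volume := by
      intro z
      exact (Continuous.aestronglyMeasurable (by fun_prop)).mul hL1.1
    have hint : Integrable (F z₀) volume := by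
      apply Integrable.mono' (hL1.norm.const_mul
        (Real.exp (2 * π * R₀ * (|z₀.im| + 1)))) (hmeas z₀)
      filter_upwards with x
      rcases le_or_gt |x| R with hxR | hxR
      · have hxR₀ : |x| ≤ R₀ := hxR.trans hRR₀
        simp only [hF, norm_mul, hnorm]
        apply mul_le_mul_of_nonneg_right _ (norm_nonneg _)
        exact hexp_le z₀ x _ hxR₀ (by linarith [abs_nonneg z₀.im, le_refl |z₀.im|])
      · simp only [hF, hfR x hxR, mul_zero, norm_zero]
        positivity
    have hmeas' : AEStronglyMeasurable (F' z₀) volume :=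
      (Continuous.aestronglyMeasurable (by fun_prop)).mul hL1.1
    refine (hasDerivAt_integral_of_dominated_loc_of_deriv_le (μ := volume)
      (F := F) (F' := F') (x₀ := z₀)
      (bound := fun x => 2 * π * R₀ * Real.exp (2 * π * R₀ * (|z₀.im| + 1)) * ‖f x‖)
      (Metric.ball_mem_nhds z₀ one_pos) (Eventually.of_forall hmeas) hint hmeas'
      (Eventually.of_forall fun x z hz => hbnd z₀ z hz x)
      ((hL1.norm.const_mul _))
      (Eventually.of_forall fun x z hz => ?_)).2
    have h1 : HasDerivAt (fun z : ℂ => (↑(2 * π * (-x)) : ℂ) * (z * Complex.I))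
        (↑(2 * π * (-x)) * Complex.I) z := by
      simpa using ((hasDerivAt_id z).mul_const Complex.I).const_mul
        ((↑(2 * π * (-x)) : ℂ))
    have h2 := h1.cexp.mul_const (f x)
    convert h2 using 1
    · rfl
    simp only [hF']
    ring
  have hdiff : Differentiable ℂ g := fun z => (hderiv z).differentiableAt
  have hanalytic : AnalyticOnNhd ℂ g Set.univ :=
    hdiff.differentiableOn.analyticOnNhd isOpen_univ
  -- g agrees with the Fourier transform on the reals
  have hkey : ∀ w : ℝ, 𝓕 f w = g ↑w := by
    intro w
    rw [Real.fourier_eq']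
    apply integral_congr_ae
    filter_upwards with v
    rw [smul_eq_mul]
    simp only [hF]
    congr 2
    have hvw : (inner ℝ v w : ℝ) = v * w := by simp [mul_comm]
    rw [hvw]
    push_cast
    ring
  -- the Fourier transform vanishes on a ray
  obtain ⟨R', hR'⟩ : ∃ R' : ℝ, tsupport (𝓕 f) ⊆ Metric.closedBall 0 R' :=
    hsupp'.isBounded.subset_closedBall 0
  have hg0 : ∀ w : ℝ, R' < w → g ↑w = 0 := by
    intro w hw
    rw [← hkey]
    apply image_eq_zero_of_notMem_tsupport
    intro hmem
    have h5 := hR' hmem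
    rw [Metric.mem_closedBall, Real.dist_eq, sub_zero] at h5
    have : w ≤ R' := le_trans (le_abs_self w) h5
    linarith
  -- identity theorem: g vanishes everywhere
  set z₀ : ℂ := ((R' + 1 : ℝ) : ℂ) with hz₀
  have htend : Tendsto (fun n : ℕ => ((R' + 1 + 1 / (n + 1) : ℝ) : ℂ)) atTop (𝓝[≠] z₀) := by
    apply tendsto_nhdsWithin_of_tendsto_nhds_of_eventually_within
    · have h1 : Tendsto (fun n : ℕ => R' + 1 + 1 / ((n : ℝ) + 1)) atTop (𝓝 (R' + 1)) := by
        simpa using (tendsto_const_nhds (x := R' + 1)).add tendsto_one_div_add_atTop_nhds_zero_nat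
      exact (Complex.continuous_ofReal.tendsto _).comp h1
    · filter_upwards with n
      rw [hz₀]
      simp only [Set.mem_compl_iff, Set.mem_singleton_iff]
      intro h
      have h2 : R' + 1 + 1 / ((n : ℝ) + 1) = R' + 1 := by exact_mod_cast h
      have h3 : (0:ℝ) < 1 / ((n : ℝ) + 1) := by positivity
      linarith
  have hfreq : ∃ᶠ z in 𝓝[≠] z₀, g z = 0 := by
    apply htend.frequently
    apply Frequently.of_forall
    intro n
    apply hg0
    have h3 : (0:ℝ) < 1 / ((n : ℝ) + 1) := by positivity
    linarith
  have hgzero : EqOn g 0 Set.univ :=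
    hanalytic.eqOn_zero_of_preconnected_of_frequently_eq_zero isPreconnected_univ
      (Set.mem_univ z₀) hfreq
  have hFzero : ∀ w : ℝ, 𝓕 f w = 0 := by
    intro w
    rw [hkey w]
    exact hgzero (Set.mem_univ _)
  -- conclude f = 0 a.e. by testing against smooth compactly supported functions
  apply ae_eq_zero_of_integral_contDiff_smul_eq_zero hL1.locallyIntegrable
  intro φ hφ hφsupp
  set φc : SchwartzMap ℝ ℂ := schwartzOfCompactSupport (fun x => (φ x : ℂ))
    (Complex.ofRealCLM.contDiff.comp hφ) (hφsupp.comp_left Complex.ofReal_zero) with hφc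
  set ψ := (FourierTransform.fourierCLE ℂ (SchwartzMap ℝ ℂ)).symm φc with hψ
  have hψf : 𝓕 (⇑ψ) = ⇑φc := by
    have h1 := (FourierTransform.fourierCLE ℂ (SchwartzMap ℝ ℂ)).apply_symm_apply φc
    have h2 : ⇑(FourierTransform.fourierCLE ℂ (SchwartzMap ℝ ℂ) ψ) = 𝓕 ⇑ψ := by
      rw [FourierTransform.fourierCLE_apply, SchwartzMap.fourier_coe]
    rw [← h2, h1]
  have hflipL : (innerₗ ℝ).flip = innerₗ ℝ := by
    apply LinearMap.ext
    intro v
    apply LinearMap.ext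
    intro w
    simp only [LinearMap.flip_apply, innerₗ_apply_apply]
    exact real_inner_comm v w
  have hflip := VectorFourier.integral_fourierIntegral_smul_eq_flip
    (μ := (volume : Measure ℝ)) (ν := (volume : Measure ℝ)) (L := innerₗ ℝ)
    (f := ⇑ψ) (g := f) Real.continuous_fourierChar continuous_inner ψ.integrable hL1
  rw [hflipL] at hflip
  have hLHS : ∫ ξ : ℝ, (VectorFourier.fourierIntegral 𝐞 volume (innerₗ ℝ) (⇑ψ) ξ) • f ξ
      = ∫ x : ℝ, (φ x : ℂ) * f x := by
    apply integral_congr_ae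
    filter_upwards with ξ
    have h3 : VectorFourier.fourierIntegral 𝐞 volume (innerₗ ℝ) (⇑ψ) ξ
        = 𝓕 (⇑ψ) ξ := rfl
    rw [h3, hψf]
    rfl
  have hRHS : ∫ x : ℝ, ψ x • (VectorFourier.fourierIntegral 𝐞 volume (innerₗ ℝ) f x)
      = (0 : ℂ) := by
    have h4 : ∀ x : ℝ, ψ x • (VectorFourier.fourierIntegral 𝐞 volume (innerₗ ℝ) f x)
        = (0 : ℂ) := by
      intro x
      have h5 : VectorFourier.fourierIntegral 𝐞 volume (innerₗ ℝ) f x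
          = 𝓕 f x := rfl
      rw [h5, hFzero x, smul_zero]
    simp only [h4, integral_zero]
  have hmain : ∫ x : ℝ, (φ x : ℂ) * f x = 0 := by
    rw [← hLHS, hflip, hRHS]
  have hsmul : (fun x : ℝ => φ x • f x) = fun x : ℝ => (φ x : ℂ) * f x := by
    funext x
    exact Complex.real_smul
  rw [hsmul, hmain]
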